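/- Let T be a firm non-expansive mapping of a weak metric space (X,δ) into itself. Then for every x ∈ X and every integer k ≥ 1, σ_k(x,T) = k·σ_1(x,T), where σ_j(x,T) = lim_{n→∞} δ(Tⁿx, T^{n+j}x). -/
import Mathlib


open Filter Topology

def IsWeakMetric {X : Type*} (δ : X → X → ℝ) : Prop :=
  (∀ x, δ x x = 0) ∧ (∀ x y, 0 ≤ δ x y) ∧ (∀ x y z, δ x z ≤ δ x y + δ y z)

def IsNonexpansive {X : Type*} (δ : X → X → ℝ) (T : X → X) : Prop :=
  ∀ x y, δ (T x) (T y) ≤ δ x y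

def IsFirm {X : Type*} (δ : X → X → ℝ) (T : X → X) : Prop :=
  ∃ q r s t : X → X → ℝ,
    (∀ x y, 0 ≤ q x y) ∧ (∀ x y, 0 ≤ r x y) ∧ (∀ x y, 0 ≤ s x y) ∧ (∀ x y, 0 ≤ t x y) ∧
    (∃ α > 0, ∀ x y, α ≤ t x y) ∧
    (∀ x y, q x y + r x y + s x y + 2 * t x y ≤ 1) ∧
    (∀ x y, δ (T x) (T y) ≤ q x y * δ x y + r x y * δ x (T x) + s x y * δ y (T y)
      + t x y * (δ x (T y) + δ (T x) y))

theorem stmt10 {X : Type*} (δ : X → X → ℝ) (T : X → X)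
    (hδ : IsWeakMetric δ) (hT : IsNonexpansive δ T) (hF : IsFirm δ T)
    (x : X) (k : ℕ) (hk : 1 ≤ k) (σ1 σk : ℝ)
    (hσ1 : Tendsto (fun n : ℕ => δ (T^[n] x) (T^[n + 1] x)) atTop (nhds σ1))
    (hσk : Tendsto (fun n : ℕ => δ (T^[n] x) (T^[n + k] x)) atTop (nhds σk)) :
    σk = k * σ1 := by
  obtain ⟨hzero, hnonneg, htri⟩ := hδ
  obtain ⟨q, r, s, t, hq, hr, hs, ht, ⟨α, hα, hαt⟩, hsum, hfirm⟩ := hF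
  set f : ℕ → ℕ → ℝ := fun j n => δ (T^[n] x) (T^[n + j] x) with hfdef
  have hanti : ∀ j, Antitone (fun n => f j n) := by
    intro j
    apply antitone_nat_of_succ_le
    intro n
    have h1 : T^[n + 1] x = T (T^[n] x) := Function.iterate_succ_apply' T n x
    have h2 : T^[n + 1 + j] x = T (T^[n + j] x) := by
      rw [show n + 1 + j = (n + j) + 1 by omega, Function.iterate_succ_apply' T (n + j) x]
    simp only [hfdef, h1, h2]
    exact hT _ _
  have hbdd : ∀ j, BddBelow (Set.range (fun n => f j n)) :=
    fun j => ⟨0, by rintro _ ⟨n, rfl⟩; exact hnonneg _ _⟩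
  set σ : ℕ → ℝ := fun j => ⨅ n, f j n with hσdef
  have hσtend : ∀ j, Tendsto (fun n => f j n) atTop (𝓝 (σ j)) :=
    fun j => tendsto_atTop_ciInf (hanti j) (hbdd j)
  have hσle : ∀ j n, σ j ≤ f j n := fun j n => ciInf_le (hbdd j) n
  have hσnonneg : ∀ j, 0 ≤ σ j := fun j =>
    le_ciInf (fun n => hnonneg _ _)
  -- upper bound: σ (j+1) ≤ σ j + σ 1
  have hupper : ∀ j, σ (j + 1) ≤ σ j + σ 1 := by
    intro j
    have htendR : Tendsto (fun n => f j n + f 1 (n + j)) atTop (𝓝 (σ j + σ 1)) :=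
      (hσtend j).add ((hσtend 1).comp (tendsto_add_atTop_nat j))
    refine le_of_tendsto_of_tendsto' (hσtend (j + 1)) htendR (fun n => ?_)
    have : f (j + 1) n ≤ f j n + f 1 (n + j) := by
      have := htri (T^[n] x) (T^[n + j] x) (T^[n + j + 1] x)
      simpa [hfdef, show n + (j + 1) = n + j + 1 by omega] using this
    exact this
  -- lower bound step: for m ≥ 1, if σ m = m σ1 and σ (m-1) = (m-1) σ1 then σ (m+1) ≥ (m+1) σ1
  have hstep : ∀ j : ℕ, σ j = j * σ 1 → σ (j + 1) = (j + 1) * σ 1 →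
      (((j : ℝ) + 1) + 1) * σ 1 ≤ σ (j + 2) := by
    intro j hj hj1
    set m := j + 1 with hm
    have hge : ∀ ε > (0:ℝ), ((m : ℝ) + 1) * σ 1 - ε / α ≤ σ (m + 1) := by
      intro ε hε
      -- eventual bounds
      have hev : ∀ᶠ n in atTop, f m n < σ m + ε ∧ f 1 n < σ 1 + ε ∧ f j n < σ j + ε := by
        filter_upwards [(tendsto_order.1 (hσtend m)).2 _ (by linarith : σ m < σ m + ε),
          (tendsto_order.1 (hσtend 1)).2 _ (by linarith : σ 1 < σ 1 + ε),
          (tendsto_order.1 (hσtend j)).2 _ (by linarith : σ j < σ j + ε)] with n h1 h2 h3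
        exact ⟨h1, h2, h3⟩
      refine ge_of_tendsto (hσtend (m + 1)) ?_
      filter_upwards [hev] with n ⟨h1, h2, h3⟩
      set u := T^[n] x with hu
      set v := T^[n + m] x with hv
      have hTu : T u = T^[n + 1] x := (Function.iterate_succ_apply' T n x).symm
      have hTv : T v = T^[n + m + 1] x := by
        rw [hv, ← Function.iterate_succ_apply' T (n + m) x]
      have hfirm' := hfirm u v
      -- identify the terms
      have e1 : δ (T u) (T v) = f m (n + 1) := by
        rw [hTu, hTv]; simp only [hfdef]; rw [show n + 1 + m = n + m + 1 by omega]
      have e2 : δ u v = f m n := rfl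
      have e3 : δ u (T u) = f 1 n := by rw [hTu]
      have e4 : δ v (T v) = f 1 (n + m) := by rw [hTv]
      have e5 : δ u (T v) = f (m + 1) n := by
        rw [hTv]; simp only [hfdef]; rw [show n + (m + 1) = n + m + 1 by omega]
      have e6 : δ (T u) v = f j (n + 1) := by
        rw [hTu]; simp only [hfdef]; rw [show n + 1 + j = n + m by omega]
      rw [e1, e2, e3, e4, e5, e6] at hfirm'
      -- bounds
      have b1 : ((j : ℝ) + 1) * σ 1 ≤ f m (n + 1) := by
        have := hσle m (n + 1); rwa [hj1] at this
      have b2 : f m n < ((j : ℝ) + 1) * σ 1 + ε := by rwa [hj1] at h1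
      have b3 : f 1 n < σ 1 + ε := h2
      have b4 : f 1 (n + m) < σ 1 + ε := lt_of_le_of_lt (hanti 1 (Nat.le_add_right n m)) h2
      have b5 : f j (n + 1) < (j : ℝ) * σ 1 + ε := by
        have := lt_of_le_of_lt (hanti j (Nat.le_succ n)) h3
        rwa [hj] at this
      have hq' := hq u v; have hr' := hr u v; have hs' := hs u v; have ht' := ht u v
      have hsum' := hsum u v
      have hσ1nn : 0 ≤ σ 1 := hσnonneg 1
      have hF0 : 0 ≤ f (m + 1) n := hnonneg _ _
      have hjm : (m : ℝ) = (j : ℝ) + 1 := by push_cast [hm]; ring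
      -- key: t * (((m:ℝ)+1) * σ 1 - f (m+1) n) ≤ ε
      have key : t u v * (((m : ℝ) + 1) * σ 1 - f (m + 1) n) ≤ ε := by
        nlinarith [mul_nonneg hr' hσ1nn, mul_nonneg hs' hσ1nn, mul_nonneg ht' hσ1nn,
          mul_nonneg hq' hσ1nn, mul_nonneg (mul_nonneg (Nat.cast_nonneg j : (0:ℝ) ≤ j) hr') hσ1nn,
          mul_nonneg (mul_nonneg (Nat.cast_nonneg j : (0:ℝ) ≤ j) hs') hσ1nn,
          mul_nonneg (mul_nonneg (Nat.cast_nonneg j : (0:ℝ) ≤ j) ht') hσ1nn,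
          mul_nonneg (Nat.cast_nonneg j : (0:ℝ) ≤ j) hσ1nn]
      have hαt' := hαt u v
      by_cases hc : ((m : ℝ) + 1) * σ 1 - f (m + 1) n ≤ 0
      · have : 0 < ε / α := div_pos hε hα
        linarith
      · push_neg at hc
        have : α * (((m : ℝ) + 1) * σ 1 - f (m + 1) n) ≤ ε :=
          le_trans (mul_le_mul_of_nonneg_right hαt' (le_of_lt hc)) key
        have h2' : ((m : ℝ) + 1) * σ 1 - f (m + 1) n ≤ ε / α := by
          rw [le_div_iff₀ hα]; linarith
        linarith
    -- conclude: let ε → 0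
    have : ((m : ℝ) + 1) * σ 1 ≤ σ (m + 1) := by
      refine le_of_forall_pos_le_add (fun ε hε => ?_)
      have h' := hge (α * ε) (mul_pos hα hε)
      have hc : α * ε / α = ε := by field_simp
      rw [hc] at h'
      linarith
    simpa [hm] using this
  -- main induction
  have hmain : ∀ j : ℕ, σ j = j * σ 1 ∧ σ (j + 1) = (j + 1) * σ 1 := by
    intro j
    induction j with
    | zero =>
      constructor
      · have h0 : ∀ n, f 0 n = 0 := fun n => by
          simp only [hfdef, Nat.add_zero]; exact hzero _
        have : σ 0 = 0 := le_antisymm (by simpa [h0 0] using hσle 0 0) (hσnonneg 0)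
        simp [this]
      · simp
    | succ j ih =>
      refine ⟨by push_cast; exact ih.2, ?_⟩
      have hlow := hstep j ih.1 ih.2
      have hup : σ (j + 2) ≤ ((j : ℝ) + 1 + 1) * σ 1 := by
        have := hupper (j + 1)
        rw [ih.2] at this
        push_cast at this ⊢
        linarith
      have : σ (j + 2) = ((j : ℝ) + 1 + 1) * σ 1 := le_antisymm hup hlow
      push_cast
      convert this using 2 <;> push_cast <;> ring
  have e1 : σ 1 = σ1 := tendsto_nhds_unique (hσtend 1) hσ1
  have ek : σ k = σk := tendsto_nhds_unique (hσtend k) hσk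
  rw [← e1, ← ek, (hmain k).1]
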